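/- For all positive integers d, k there is a constant υ = υ(d,k) with the following property. Let G be a graph and let B be a d-short υ-block in G. Then every k-element subset B' of B is a d-short strong k-block in G. -/

import Mathlib

/-- `l` is the vertex sequence of an induced path in `G`. -/
def IsPathList {V : Type} (G : SimpleGraph V) (l : List V) : Prop :=
  l ≠ [] ∧ l.Nodup ∧ ∀ i j : Fin l.length,
    (G.Adj (l.get i) (l.get j) ↔ (i.1 + 1 = j.1 ∨ j.1 + 1 = i.1))

/-- `p` is an induced path in `G` from `x` to `y`. -/
def IsXYPath {V : Type} (G : SimpleGraph V) (x y : V) (p : List V) : Prop :=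
  IsPathList G p ∧ p.head? = some x ∧ p.getLast? = some y

/-- `B` is a `d`-short `k`-block in `G`. -/
def DShortBlock {V : Type} (G : SimpleGraph V) (d k : ℕ) (B : Finset V) : Prop :=
  k ≤ B.card ∧ ∀ x ∈ B, ∀ y ∈ B, x ≠ y →
    ∃ P : Finset (List V), P.card = k ∧
      (∀ p ∈ P, IsXYPath G x y p ∧ p.length ≤ d + 1) ∧
      ∀ p ∈ P, ∀ p' ∈ P, p ≠ p' → ∀ v ∈ p, v ∈ p' → v = x ∨ v = y

/-- `B` is a `d`-short strong `k`-block in `G`: the collections of `k`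
internally disjoint short paths can be chosen coherently so that the interior
of any path for one pair avoids all vertices of the paths for any other pair. -/
def DShortStrongBlock {V : Type} (G : SimpleGraph V) (d k : ℕ) (B : Finset V) : Prop :=
  k ≤ B.card ∧ ∃ P : V → V → Finset (List V),
    (∀ x ∈ B, ∀ y ∈ B, x ≠ y →
      (P x y).card = k ∧
      (∀ p ∈ P x y, IsXYPath G x y p ∧ p.length ≤ d + 1) ∧
      ∀ p ∈ P x y, ∀ p' ∈ P x y, p ≠ p' → ∀ v ∈ p, v ∈ p' → v = x ∨ v = y) ∧
    (∀ x ∈ B, ∀ y ∈ B, ∀ x' ∈ B, ∀ y' ∈ B, x ≠ y → x' ≠ y' →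
      ¬ (x = x' ∧ y = y') → ¬ (x = y' ∧ y = x') →
      ∀ p ∈ P x y, ∀ v ∈ p, v ≠ x → v ≠ y → ∀ p' ∈ P x' y', v ∉ p')

lemma greedy {V : Type} (G : SimpleGraph V) (d k υ : ℕ) (B : Finset V)
    (hB : ∀ x ∈ B, ∀ y ∈ B, x ≠ y →
      ∃ P : Finset (List V), P.card = υ ∧
        (∀ p ∈ P, IsXYPath G x y p ∧ p.length ≤ d + 1) ∧
        ∀ p ∈ P, ∀ p' ∈ P, p ≠ p' → ∀ v ∈ p, v ∈ p' → v = x ∨ v = y) :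
    ∀ L : List (V × V), L.Nodup →
    (∀ z ∈ L, z.1 ∈ B ∧ z.2 ∈ B ∧ z.1 ≠ z.2) →
    ∀ U : Finset V, (∀ z ∈ L, z.1 ∈ U ∧ z.2 ∈ U) →
    U.card + k * (d + 1) * L.length + k ≤ υ →
    ∃ f : V → V → Finset (List V),
      (∀ z ∈ L, (f z.1 z.2).card = k ∧
        ∀ p ∈ f z.1 z.2, (IsXYPath G z.1 z.2 p ∧ p.length ≤ d + 1) ∧
          ∀ v ∈ p, v ≠ z.1 → v ≠ z.2 → v ∉ U) ∧
      (∀ z ∈ L, ∀ z' ∈ L, ∀ p ∈ f z.1 z.2, ∀ p' ∈ f z'.1 z'.2, p ≠ p' →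
        ∀ v ∈ p, v ≠ z.1 → v ≠ z.2 → v ∉ p') := by
  classical
  intro L
  induction L with
  | nil =>
      intro _ _ U _ _
      exact ⟨fun _ _ => ∅, by simp, by simp⟩
  | cons z L' ih =>
      intro hnd hmem U hU hcard
      obtain ⟨x, y⟩ := z
      obtain ⟨hx, hy, hxy⟩ := hmem (x, y) List.mem_cons_self
      obtain ⟨P0, hP0card, hP0path, hP0disj⟩ := hB x hx y hy hxy
      -- the good paths: interiors avoid U
      set F : Finset (List V) :=
        P0.filter (fun p => ∀ v ∈ p, v ≠ x → v ≠ y → v ∉ U) with hF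
      -- bound the number of bad paths by |U|
      have hbad : (P0.filter (fun p => ¬ ∀ v ∈ p, v ≠ x → v ≠ y → v ∉ U)).card
          ≤ U.card := by
        set g : List V → V := fun p =>
          if h : ∃ v, v ∈ p ∧ v ≠ x ∧ v ≠ y ∧ v ∈ U then h.choose else x with hg
        have hwit : ∀ p ∈ P0.filter (fun p => ¬ ∀ v ∈ p, v ≠ x → v ≠ y → v ∉ U),
            g p ∈ p ∧ g p ≠ x ∧ g p ≠ y ∧ g p ∈ U := by
          intro p hp
          rw [Finset.mem_filter] at hp
          have hex : ∃ v, v ∈ p ∧ v ≠ x ∧ v ≠ y ∧ v ∈ U := by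
            push_neg at hp
            obtain ⟨v, hv1, hv2, hv3, hv4⟩ := hp.2
            exact ⟨v, hv1, hv2, hv3, hv4⟩
          simp only [hg, dif_pos hex]
          exact hex.choose_spec
        apply Finset.card_le_card_of_injOn g
        · intro p hp; exact (hwit p hp).2.2.2
        · intro p hp p' hp' hgg
          by_contra hne
          have h1 := hwit p hp
          have h2 := hwit p' hp'
          have := hP0disj p (Finset.mem_filter.1 hp).1 p' (Finset.mem_filter.1 hp').1
            hne (g p) h1.1 (hgg ▸ h2.1)
          rcases this with h | h
          · exact h1.2.1 h
          · exact h1.2.2.1 h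
      have hFcard : k ≤ F.card := by
        have := Finset.card_filter_add_card_filter_not
          (s := P0) (p := fun p => ∀ v ∈ p, v ≠ x → v ≠ y → v ∉ U)
        rw [hF]
        omega
      obtain ⟨F', hF'sub, hF'card⟩ := Finset.exists_subset_card_eq hFcard
      -- properties of F'
      have hF'P0 : ∀ p ∈ F', p ∈ P0 := fun p hp =>
        (Finset.mem_filter.1 (hF'sub hp)).1
      have hF'int : ∀ p ∈ F', ∀ v ∈ p, v ≠ x → v ≠ y → v ∉ U := fun p hp =>
        (Finset.mem_filter.1 (hF'sub hp)).2
      set U' : Finset V := U ∪ F'.biUnion (fun p => p.toFinset) with hU'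
      have hUsub : U ⊆ U' := Finset.subset_union_left
      have hU'card : U'.card ≤ U.card + k * (d + 1) := by
        have h1 : (F'.biUnion (fun p => p.toFinset)).card
            ≤ ∑ p ∈ F', p.toFinset.card := Finset.card_biUnion_le
        have h2 : ∑ p ∈ F', p.toFinset.card ≤ ∑ p ∈ F', (d + 1) := by
          apply Finset.sum_le_sum
          intro p hp
          exact le_trans p.toFinset_card_le ((hP0path p (hF'P0 p hp)).2)
        have h3 : ∑ p ∈ F', (d + 1) = k * (d + 1) := by
          rw [Finset.sum_const, hF'card, smul_eq_mul]
        calc U'.card ≤ U.card + (F'.biUnion (fun p => p.toFinset)).card :=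
              Finset.card_union_le _ _
          _ ≤ U.card + k * (d + 1) := by omega
      -- apply IH
      have hlen : k * (d + 1) * (L'.length + 1)
          = k * (d + 1) * L'.length + k * (d + 1) := by ring
      obtain ⟨f', hf'1, hf'2⟩ := ih hnd.of_cons
        (fun w hw => hmem w (List.mem_cons_of_mem _ hw)) U'
        (fun w hw => ⟨hUsub (hU w (List.mem_cons_of_mem _ hw)).1,
          hUsub (hU w (List.mem_cons_of_mem _ hw)).2⟩)
        (by simp only [List.length_cons] at hcard; rw [hlen] at hcard; omega)
      have hznotin : (x, y) ∉ L' := (List.nodup_cons.1 hnd).1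
      refine ⟨fun a b => if (a, b) = (x, y) then F' else f' a b, ?_, ?_⟩
      · intro w hw
        rcases List.mem_cons.1 hw with rfl | hw'
        · have hrfl : ((x, y).1, (x, y).2) = (x, y) := rfl
          simp only [if_pos hrfl]
          refine ⟨hF'card, fun p hp => ⟨hP0path p (hF'P0 p hp), hF'int p hp⟩⟩
        · have hne : (w.1, w.2) ≠ (x, y) := by
            intro h; exact hznotin ((Prod.mk.eta.symm.trans h) ▸ hw')
          simp only [if_neg hne]
          obtain ⟨hc, hp⟩ := hf'1 w hw'
          exact ⟨hc, fun p hpp => ⟨(hp p hpp).1,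
            fun v hv h1 h2 => fun hvU => (hp p hpp).2 v hv h1 h2 (hUsub hvU)⟩⟩
      · intro w hw w' hw' p hp p' hp' hpne v hvp hvx hvy hvp'
        rcases List.mem_cons.1 hw with rfl | hw2
        · rcases List.mem_cons.1 hw' with rfl | hw2'
          · -- both are (x,y)
            have hrfl : ((x, y).1, (x, y).2) = (x, y) := rfl
            simp only [if_pos hrfl] at hp hp'
            rcases hP0disj p (hF'P0 p hp) p' (hF'P0 p' hp') hpne v hvp hvp' with h | h
            · exact hvx h
            · exact hvy h
          · -- p for (x,y), p' for later pair
            have hrfl : ((x, y).1, (x, y).2) = (x, y) := rfl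
            simp only [if_pos hrfl] at hp
            have hne' : (w'.1, w'.2) ≠ (x, y) := by
              intro h; exact hznotin ((Prod.mk.eta.symm.trans h) ▸ hw2')
            simp only [if_neg hne'] at hp'
            obtain ⟨_, hprop⟩ := hf'1 w' hw2'
            by_cases h1 : v = w'.1
            · exact hF'int p hp v hvp hvx hvy
                (h1 ▸ (hU w' (List.mem_cons_of_mem _ hw2')).1)
            by_cases h2 : v = w'.2
            · exact hF'int p hp v hvp hvx hvy
                (h2 ▸ (hU w' (List.mem_cons_of_mem _ hw2')).2)
            · apply (hprop p' hp').2 v hvp' h1 h2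
              apply Finset.mem_union_right
              exact Finset.mem_biUnion.2 ⟨p, hp, List.mem_toFinset.2 hvp⟩
        · rcases List.mem_cons.1 hw' with rfl | hw2'
          · -- p for later pair, p' for (x,y)
            have hne'' : (w.1, w.2) ≠ (x, y) := by
              intro h; exact hznotin ((Prod.mk.eta.symm.trans h) ▸ hw2)
            simp only [if_neg hne''] at hp
            have hrfl : ((x, y).1, (x, y).2) = (x, y) := rfl
            simp only [if_pos hrfl] at hp'
            obtain ⟨_, hprop⟩ := hf'1 w hw2
            apply (hprop p hp).2 v hvp hvx hvy
            apply Finset.mem_union_right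
            exact Finset.mem_biUnion.2 ⟨p', hp', List.mem_toFinset.2 hvp'⟩
          · -- both later pairs
            have hne1 : (w.1, w.2) ≠ (x, y) := by
              intro h; exact hznotin ((Prod.mk.eta.symm.trans h) ▸ hw2)
            have hne2 : (w'.1, w'.2) ≠ (x, y) := by
              intro h; exact hznotin ((Prod.mk.eta.symm.trans h) ▸ hw2')
            simp only [if_neg hne1] at hp
            simp only [if_neg hne2] at hp'
            exact hf'2 w hw2 w' hw2' p hp p' hp' hpne v hvp hvx hvy hvp'

theorem stmt9 (d k : ℕ) (hd : 0 < d) (hk : 0 < k) :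
    ∃ υ : ℕ, ∀ (V : Type) (G : SimpleGraph V) (B : Finset V),
      DShortBlock G d υ B →
      ∀ B' ⊆ B, B'.card = k → DShortStrongBlock G d k B' := by
  classical
  refine ⟨2 * k + k * (d + 1) * (k * k), ?_⟩
  intro V G B hB B' hsub hcard
  set S : Finset (V × V) := (B' ×ˢ B').filter (fun z => z.1 ≠ z.2) with hS
  set L : List (V × V) := S.toList with hL
  have hmemL : ∀ z : V × V, z ∈ L ↔ (z.1 ∈ B' ∧ z.2 ∈ B' ∧ z.1 ≠ z.2) := by
    intro z
    rw [hL, Finset.mem_toList, hS, Finset.mem_filter, Finset.mem_product]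
    tauto
  have hlenL : L.length ≤ k * k := by
    have h1 : L.length = S.card := Finset.length_toList S
    have h2 : S.card ≤ (B' ×ˢ B').card := Finset.card_filter_le _ _
    have h3 : (B' ×ˢ B').card = k * k := by
      rw [Finset.card_product, hcard]
    omega
  have hbound : B'.card + k * (d + 1) * L.length + k
      ≤ 2 * k + k * (d + 1) * (k * k) := by
    have := Nat.mul_le_mul_left (k * (d + 1)) hlenL
    omega
  obtain ⟨f, h1, h2⟩ := greedy G d k (2 * k + k * (d + 1) * (k * k)) B hB.2
    L (Finset.nodup_toList S)
    (fun z hz => ⟨hsub ((hmemL z).1 hz).1, hsub ((hmemL z).1 hz).2.1,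
      ((hmemL z).1 hz).2.2⟩)
    B' (fun z hz => ⟨((hmemL z).1 hz).1, ((hmemL z).1 hz).2.1⟩) hbound
  refine ⟨hcard.ge, f, ?_, ?_⟩
  · intro x hx y hy hxy
    have hz : (x, y) ∈ L := (hmemL (x, y)).2 ⟨hx, hy, hxy⟩
    obtain ⟨hc, hp⟩ := h1 (x, y) hz
    refine ⟨hc, fun p hpf => (hp p hpf).1, ?_⟩
    intro p hpf p' hp'f hne v hvp hvp'
    by_contra hcon
    push_neg at hcon
    exact h2 (x, y) hz (x, y) hz p hpf p' hp'f hne v hvp hcon.1 hcon.2 hvp'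
  · intro x hx y hy x' hx' y' hy' hxy hx'y' hne1 hne2 p hpf v hv hvx hvy p' hp'f
    have hz : (x, y) ∈ L := (hmemL (x, y)).2 ⟨hx, hy, hxy⟩
    have hz' : (x', y') ∈ L := (hmemL (x', y')).2 ⟨hx', hy', hx'y'⟩
    have hpne : p ≠ p' := by
      intro h
      subst h
      have hxy1 := ((h1 (x, y) hz).2 p hpf).1.1.2.1
      have hxy2 := ((h1 (x', y') hz').2 p hp'f).1.1.2.1
      have hxy3 := ((h1 (x, y) hz).2 p hpf).1.1.2.2
      have hxy4 := ((h1 (x', y') hz').2 p hp'f).1.1.2.2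
      exact hne1 ⟨Option.some.inj (hxy1.symm.trans hxy2),
        Option.some.inj (hxy3.symm.trans hxy4)⟩
    exact h2 (x, y) hz (x', y') hz' p hpf p' hp'f hpne v hv hvx hvy
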